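/- Let α ∈ [0,1) and define h₀ : (0,∞) → ℝ by h₀(x) = x^{−α/2}·( exp(−x^{1+α}/(1+α)) − 1 + x^{1+α}/(1+α) ). Then h₀ is twice continuously differentiable on (0,∞) and both ∫₀^∞ x^{−4}·h₀(x)² dx < ∞ and ∫₀^∞ h₀''(x)² dx < ∞. -/

import Mathlib

open MeasureTheory

/-- The function `h₀(x) = x^{−α/2} ( exp(−x^{1+α}/(1+α)) − 1 + x^{1+α}/(1+α) )`. -/
noncomputable def hZero (α : ℝ) (x : ℝ) : ℝ :=
  x ^ (-(α / 2)) * (Real.exp (-(x ^ (1 + α) / (1 + α))) - 1 + x ^ (1 + α) / (1 + α))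

noncomputable def hOne (α x : ℝ) : ℝ :=
  -(α / 2) * x ^ (-(α / 2) - 1) *
      (Real.exp (-(x ^ (1 + α) / (1 + α))) - 1 + x ^ (1 + α) / (1 + α))
    + x ^ (-(α / 2)) * (x ^ α * (1 - Real.exp (-(x ^ (1 + α) / (1 + α)))))

noncomputable def hTwo (α x : ℝ) : ℝ :=
  α / 2 * (α / 2 + 1) * x ^ (-(α / 2) - 2) *
      (Real.exp (-(x ^ (1 + α) / (1 + α))) - 1 + x ^ (1 + α) / (1 + α))
    - α * x ^ (-(α / 2) - 1) * (x ^ α * (1 - Real.exp (-(x ^ (1 + α) / (1 + α)))))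
    + x ^ (-(α / 2)) * (α * x ^ (α - 1) * (1 - Real.exp (-(x ^ (1 + α) / (1 + α)))))
    + x ^ (-(α / 2)) * (x ^ α * (x ^ α * Real.exp (-(x ^ (1 + α) / (1 + α)))))

section derivs
variable {α x : ℝ}

lemma hasDerivAt_U (hα : 0 ≤ α) (hx : 0 < x) :
    HasDerivAt (fun y : ℝ => y ^ (1 + α) / (1 + α)) (x ^ α) x := by
  have h := (Real.hasDerivAt_rpow_const (p := 1 + α) (Or.inl hx.ne')).div_const (1 + α)
  have h1 : (1 : ℝ) + α ≠ 0 := by linarith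
  refine h.congr_deriv ?_
  rw [show 1 + α - 1 = α by ring]
  field_simp

lemma hasDerivAt_F (hα : 0 ≤ α) (hx : 0 < x) :
    HasDerivAt (fun y : ℝ => Real.exp (-(y ^ (1 + α) / (1 + α))) - 1 + y ^ (1 + α) / (1 + α))
      (x ^ α * (1 - Real.exp (-(x ^ (1 + α) / (1 + α))))) x := by
  have hU := hasDerivAt_U hα hx
  have hE := hU.neg.exp
  have h := (hE.sub_const 1).add hU
  refine h.congr_deriv ?_
  simp only [Pi.neg_apply]
  ring

lemma hasDerivAt_hZero (hα : 0 ≤ α) (hx : 0 < x) :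
    HasDerivAt (hZero α) (hOne α x) x := by
  have hP : HasDerivAt (fun y : ℝ => y ^ (-(α / 2))) (-(α / 2) * x ^ (-(α / 2) - 1)) x :=
    Real.hasDerivAt_rpow_const (Or.inl hx.ne')
  have h := hP.mul (hasDerivAt_F hα hx)
  unfold hZero hOne
  exact h

lemma hasDerivAt_hOne (hα : 0 ≤ α) (hx : 0 < x) :
    HasDerivAt (hOne α) (hTwo α x) x := by
  have hP : HasDerivAt (fun y : ℝ => y ^ (-(α / 2))) (-(α / 2) * x ^ (-(α / 2) - 1)) x :=
    Real.hasDerivAt_rpow_const (Or.inl hx.ne')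
  have hQ : HasDerivAt (fun y : ℝ => y ^ (-(α / 2) - 1))
      ((-(α / 2) - 1) * x ^ (-(α / 2) - 1 - 1)) x :=
    Real.hasDerivAt_rpow_const (Or.inl hx.ne')
  have hR : HasDerivAt (fun y : ℝ => y ^ α) (α * x ^ (α - 1)) x :=
    Real.hasDerivAt_rpow_const (Or.inl hx.ne')
  have hU := hasDerivAt_U hα hx
  have hE := hU.neg.exp
  have hF := hasDerivAt_F hα hx
  have h1 := (hQ.const_mul (-(α / 2))).mul hF
  have h2 := hP.mul (hR.mul ((hE.const_sub 1)))
  have h := h1.add h2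
  unfold hOne hTwo
  refine h.congr_deriv ?_
  simp only [Pi.neg_apply, Pi.mul_apply]
  rw [show -(α / 2) - 1 - 1 = -(α / 2) - 2 by ring]
  ring

end derivs

section bounds
variable {α x : ℝ}

lemma F_nonneg (t : ℝ) : 0 ≤ Real.exp (-t) - 1 + t := by
  have := Real.add_one_le_exp (-t); linarith

lemma F_le_sq {t : ℝ} (ht : 0 ≤ t) : Real.exp (-t) - 1 + t ≤ t ^ 2 := by
  have h1 : (1 : ℝ) + t ≤ Real.exp t := by have := Real.add_one_le_exp t; linarith
  have h2 : Real.exp (-t) ≤ 1 / (1 + t) := by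
    rw [Real.exp_neg, one_div]
    exact inv_anti₀ (by linarith) h1
  have h3 : 1 / (1 + t) ≤ t ^ 2 + 1 - t := by
    rw [div_le_iff₀ (by linarith : (0:ℝ) < 1 + t)]
    nlinarith
  linarith

lemma oneSubE_nonneg {t : ℝ} (ht : 0 ≤ t) : 0 ≤ 1 - Real.exp (-t) := by
  have : Real.exp (-t) ≤ 1 := Real.exp_le_one_iff.mpr (by linarith)
  linarith

lemma oneSubE_le {t : ℝ} (ht : 0 ≤ t) : 1 - Real.exp (-t) ≤ t := by
  have := Real.add_one_le_exp (-t); linarith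

lemma exp_neg_le_cube {t : ℝ} (ht : 0 < t) : Real.exp (-t) ≤ 27 / t ^ 3 := by
  have h1 : t / 3 ≤ Real.exp (t / 3) := by have := Real.add_one_le_exp (t / 3); linarith
  have h2 : (t / 3) ^ 3 ≤ Real.exp (t / 3) ^ 3 := by
    apply pow_le_pow_left₀ (by positivity) h1
  have h3 : Real.exp (t / 3) ^ 3 = Real.exp t := by
    rw [← Real.exp_nat_mul]; push_cast; ring_nf
  rw [Real.exp_neg]
  have ht3 : (0:ℝ) < t ^ 3 := by positivity
  have hkey : t ^ 3 / 27 ≤ Real.exp t := by rw [h3] at h2; nlinarith [h2]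
  calc (Real.exp t)⁻¹ ≤ (t ^ 3 / 27)⁻¹ := inv_anti₀ (by positivity) hkey
    _ = 27 / t ^ 3 := by rw [inv_div]
  
/-- u = x^(1+α)/(1+α) is between 0 and x^(1+α). -/
lemma u_nonneg (hα : 0 ≤ α) (hx : 0 < x) : 0 ≤ x ^ (1 + α) / (1 + α) := by
  have := Real.rpow_nonneg hx.le (1 + α); positivity

lemma u_le (hα : 0 ≤ α) (hx : 0 < x) : x ^ (1 + α) / (1 + α) ≤ x ^ (1 + α) := by
  have h0 := Real.rpow_nonneg hx.le (1 + α)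
  rw [div_le_iff₀ (by linarith : (0:ℝ) < 1 + α)]
  nlinarith

end bounds

section keybounds
variable {α x : ℝ}

lemma rpow_sum3 (hx : 0 < x) (a b c : ℝ) : x ^ a * x ^ b * x ^ c = x ^ (a + b + c) := by
  rw [← Real.rpow_add hx, ← Real.rpow_add hx]

lemma hTwo_abs_le_small (hα0 : 0 ≤ α) (hα1 : α < 1) (hx : 0 < x) (hx1 : x ≤ 1) :
    |hTwo α x| ≤ 4 := by
  have hxa : ∀ p : ℝ, 0 ≤ x ^ p := fun p => Real.rpow_nonneg hx.le p
  set u := x ^ (1 + α) / (1 + α) with hu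
  set E := Real.exp (-u) with hE
  set X := x ^ (1 + α) with hX
  have hu0 : 0 ≤ u := u_nonneg hα0 hx
  have hu1 : u ≤ X := u_le hα0 hx
  have hF0 : 0 ≤ E - 1 + u := F_nonneg u
  have hF1 : E - 1 + u ≤ X * X := by nlinarith [F_le_sq hu0]
  have h1E0 : 0 ≤ 1 - E := oneSubE_nonneg hu0
  have h1E1 : 1 - E ≤ X := (oneSubE_le hu0).trans hu1
  have hE0 : 0 ≤ E := (Real.exp_pos _).le
  have hE1 : E ≤ 1 := by linarith
  have hc : 0 ≤ α / 2 * (α / 2 + 1) := by nlinarith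
  have hc1 : α / 2 * (α / 2 + 1) ≤ 1 := by nlinarith
  -- term bounds
  have hone : ∀ p : ℝ, 0 ≤ p → x ^ p ≤ 1 := fun p hp => Real.rpow_le_one hx.le hx1 hp
  have hT1 : α / 2 * (α / 2 + 1) * x ^ (-(α / 2) - 2) * (E - 1 + u) ≤ 1 := by
    calc α / 2 * (α / 2 + 1) * x ^ (-(α / 2) - 2) * (E - 1 + u)
        ≤ 1 * x ^ (-(α / 2) - 2) * (X * X) := by
          apply mul_le_mul (mul_le_mul hc1 le_rfl (hxa _) zero_le_one) hF1 hF0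
          positivity
      _ = x ^ (-(α / 2) - 2) * X * X := by ring
      _ = x ^ ((-(α / 2) - 2) + (1 + α) + (1 + α)) := rpow_sum3 hx _ _ _
      _ ≤ 1 := hone _ (by linarith)
  have hT1' : 0 ≤ α / 2 * (α / 2 + 1) * x ^ (-(α / 2) - 2) * (E - 1 + u) :=
    mul_nonneg (mul_nonneg hc (hxa _)) hF0
  have hT2 : α * x ^ (-(α / 2) - 1) * (x ^ α * (1 - E)) ≤ 1 := by
    calc α * x ^ (-(α / 2) - 1) * (x ^ α * (1 - E))
        ≤ 1 * x ^ (-(α / 2) - 1) * (x ^ α * X) := by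
          apply mul_le_mul (mul_le_mul hα1.le le_rfl (hxa _) zero_le_one)
            (mul_le_mul le_rfl h1E1 h1E0 (hxa _)) (mul_nonneg (hxa _) h1E0)
          positivity
      _ = x ^ (-(α / 2) - 1) * x ^ α * X := by ring
      _ = x ^ ((-(α / 2) - 1) + α + (1 + α)) := rpow_sum3 hx _ _ _
      _ ≤ 1 := hone _ (by linarith)
  have hT2' : 0 ≤ α * x ^ (-(α / 2) - 1) * (x ^ α * (1 - E)) :=
    mul_nonneg (mul_nonneg hα0 (hxa _)) (mul_nonneg (hxa _) h1E0)
  have hT3 : x ^ (-(α / 2)) * (α * x ^ (α - 1) * (1 - E)) ≤ 1 := by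
    calc x ^ (-(α / 2)) * (α * x ^ (α - 1) * (1 - E))
        ≤ x ^ (-(α / 2)) * (1 * x ^ (α - 1) * X) := by
          apply mul_le_mul le_rfl
            (mul_le_mul (mul_le_mul hα1.le le_rfl (hxa _) zero_le_one) h1E1 h1E0
              (by positivity)) (mul_nonneg (mul_nonneg hα0 (hxa _)) h1E0) (hxa _)
      _ = x ^ (-(α / 2)) * x ^ (α - 1) * X := by ring
      _ = x ^ (-(α / 2) + (α - 1) + (1 + α)) := rpow_sum3 hx _ _ _
      _ ≤ 1 := hone _ (by linarith)
  have hT3' : 0 ≤ x ^ (-(α / 2)) * (α * x ^ (α - 1) * (1 - E)) :=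
    mul_nonneg (hxa _) (mul_nonneg (mul_nonneg hα0 (hxa _)) h1E0)
  have hT4 : x ^ (-(α / 2)) * (x ^ α * (x ^ α * E)) ≤ 1 := by
    calc x ^ (-(α / 2)) * (x ^ α * (x ^ α * E))
        ≤ x ^ (-(α / 2)) * (x ^ α * (x ^ α * 1)) := by
          apply mul_le_mul le_rfl
            (mul_le_mul le_rfl (mul_le_mul le_rfl hE1 hE0 (hxa _))
              (mul_nonneg (hxa _) hE0) (hxa _)) (mul_nonneg (hxa _) (mul_nonneg (hxa _) hE0))
            (hxa _)
      _ = x ^ (-(α / 2)) * x ^ α * x ^ α := by ring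
      _ = x ^ (-(α / 2) + α + α) := rpow_sum3 hx _ _ _
      _ ≤ 1 := hone _ (by linarith)
  have hT4' : 0 ≤ x ^ (-(α / 2)) * (x ^ α * (x ^ α * E)) :=
    mul_nonneg (hxa _) (mul_nonneg (hxa _) (mul_nonneg (hxa _) hE0))
  unfold hTwo
  rw [abs_le]
  constructor <;> [linarith; linarith]

end keybounds

section largebounds
variable {α x : ℝ}

lemma hTwo_abs_le_large (hα0 : 0 ≤ α) (hα1 : α < 1) (hx1 : 1 ≤ x) :
    |hTwo α x| ≤ 300 * x ^ (α / 2 - 1) := by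
  have hx : 0 < x := lt_of_lt_of_le one_pos hx1
  have hxa : ∀ p : ℝ, 0 ≤ x ^ p := fun p => Real.rpow_nonneg hx.le p
  set u := x ^ (1 + α) / (1 + α) with hu
  set E := Real.exp (-u) with hE
  set X := x ^ (1 + α) with hX
  have hu0 : 0 ≤ u := u_nonneg hα0 hx
  have hu1 : u ≤ X := u_le hα0 hx
  have hF0 : 0 ≤ E - 1 + u := F_nonneg u
  have h1E0 : 0 ≤ 1 - E := oneSubE_nonneg hu0
  have hE0 : 0 ≤ E := (Real.exp_pos _).le
  have hE1 : E ≤ 1 := by linarith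
  have hF1 : E - 1 + u ≤ X := by linarith
  have hc : 0 ≤ α / 2 * (α / 2 + 1) := by nlinarith
  have hc1 : α / 2 * (α / 2 + 1) ≤ 1 := by nlinarith
  have hmono : ∀ p q : ℝ, p ≤ q → x ^ p ≤ x ^ q :=
    fun p q h => Real.rpow_le_rpow_of_exponent_le hx1 h
  have hgoal0 : 0 ≤ x ^ (α / 2 - 1) := hxa _
  -- E decays: E ≤ 216 * x^(-3)
  have hxX : x ≤ X := by
    have := hmono 1 (1 + α) (by linarith)
    rwa [Real.rpow_one] at this
  have hux : x / 2 ≤ u := by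
    rw [hu, le_div_iff₀ (by linarith : (0:ℝ) < 1 + α)]
    nlinarith
  have hE2 : E ≤ 216 / x ^ 3 := by
    calc E ≤ Real.exp (-(x / 2)) := Real.exp_le_exp.mpr (by linarith)
      _ ≤ 27 / (x / 2) ^ 3 := exp_neg_le_cube (by linarith)
      _ = 216 / x ^ 3 := by field_simp; ring
  have hT1 : α / 2 * (α / 2 + 1) * x ^ (-(α / 2) - 2) * (E - 1 + u) ≤ x ^ (α / 2 - 1) := by
    calc α / 2 * (α / 2 + 1) * x ^ (-(α / 2) - 2) * (E - 1 + u)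
        ≤ 1 * x ^ (-(α / 2) - 2) * X := by
          apply mul_le_mul (mul_le_mul hc1 le_rfl (hxa _) zero_le_one) hF1 hF0
          positivity
      _ = x ^ (-(α / 2) - 2) * X * 1 := by ring
      _ = x ^ ((-(α / 2) - 2) + (1 + α) + 0) := by
          rw [← rpow_sum3 hx, Real.rpow_zero]
      _ ≤ x ^ (α / 2 - 1) := hmono _ _ (by linarith)
  have hT1' : 0 ≤ α / 2 * (α / 2 + 1) * x ^ (-(α / 2) - 2) * (E - 1 + u) :=
    mul_nonneg (mul_nonneg hc (hxa _)) hF0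
  have hT2 : α * x ^ (-(α / 2) - 1) * (x ^ α * (1 - E)) ≤ x ^ (α / 2 - 1) := by
    calc α * x ^ (-(α / 2) - 1) * (x ^ α * (1 - E))
        ≤ 1 * x ^ (-(α / 2) - 1) * (x ^ α * 1) := by
          apply mul_le_mul (mul_le_mul hα1.le le_rfl (hxa _) zero_le_one)
            (mul_le_mul le_rfl (by linarith) h1E0 (hxa _)) (mul_nonneg (hxa _) h1E0)
          positivity
      _ = x ^ (-(α / 2) - 1) * x ^ α * x ^ (0:ℝ) := by rw [Real.rpow_zero]; ring
      _ = x ^ ((-(α / 2) - 1) + α + 0) := rpow_sum3 hx _ _ _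
      _ ≤ x ^ (α / 2 - 1) := hmono _ _ (by linarith)
  have hT2' : 0 ≤ α * x ^ (-(α / 2) - 1) * (x ^ α * (1 - E)) :=
    mul_nonneg (mul_nonneg hα0 (hxa _)) (mul_nonneg (hxa _) h1E0)
  have hT3 : x ^ (-(α / 2)) * (α * x ^ (α - 1) * (1 - E)) ≤ x ^ (α / 2 - 1) := by
    calc x ^ (-(α / 2)) * (α * x ^ (α - 1) * (1 - E))
        ≤ x ^ (-(α / 2)) * (1 * x ^ (α - 1) * 1) := by
          apply mul_le_mul le_rfl
            (mul_le_mul (mul_le_mul hα1.le le_rfl (hxa _) zero_le_one) (by linarith) h1E0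
              (by positivity)) (mul_nonneg (mul_nonneg hα0 (hxa _)) h1E0) (hxa _)
      _ = x ^ (-(α / 2)) * x ^ (α - 1) * x ^ (0:ℝ) := by rw [Real.rpow_zero]; ring
      _ = x ^ (-(α / 2) + (α - 1) + 0) := rpow_sum3 hx _ _ _
      _ ≤ x ^ (α / 2 - 1) := hmono _ _ (by linarith)
  have hT3' : 0 ≤ x ^ (-(α / 2)) * (α * x ^ (α - 1) * (1 - E)) :=
    mul_nonneg (hxa _) (mul_nonneg (mul_nonneg hα0 (hxa _)) h1E0)
  have hT4 : x ^ (-(α / 2)) * (x ^ α * (x ^ α * E)) ≤ 216 * x ^ (α / 2 - 1) := by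
    have hx3 : x ^ (3:ℕ) = x ^ ((3:ℝ)) := by
      rw [← Real.rpow_natCast x 3]; norm_num
    have hE3 : E ≤ 216 * x ^ ((-3:ℝ)) := by
      rw [Real.rpow_neg hx.le, ← hx3]
      calc E ≤ 216 / x ^ 3 := hE2
        _ = 216 * (x ^ (3:ℕ))⁻¹ := by rw [div_eq_mul_inv]
    calc x ^ (-(α / 2)) * (x ^ α * (x ^ α * E))
        ≤ x ^ (-(α / 2)) * (x ^ α * (x ^ α * (216 * x ^ ((-3:ℝ))))) := by
          apply mul_le_mul le_rfl
            (mul_le_mul le_rfl (mul_le_mul le_rfl hE3 hE0 (hxa _))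
              (mul_nonneg (hxa _) hE0) (hxa _))
            (mul_nonneg (hxa _) (mul_nonneg (hxa _) hE0)) (hxa _)
      _ = 216 * (x ^ (-(α / 2)) * x ^ α * (x ^ α * x ^ ((-3:ℝ)))) := by ring
      _ = 216 * x ^ ((-(α / 2)) + α + (α + (-3))) := by
          rw [← Real.rpow_add hx α, rpow_sum3 hx]
      _ ≤ 216 * x ^ (α / 2 - 1) := by
          have := hmono ((-(α / 2)) + α + (α + (-3))) (α / 2 - 1) (by linarith)
          linarith
  have hT4' : 0 ≤ x ^ (-(α / 2)) * (x ^ α * (x ^ α * E)) :=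
    mul_nonneg (hxa _) (mul_nonneg (hxa _) (mul_nonneg (hxa _) hE0))
  unfold hTwo
  rw [abs_le]
  constructor <;> [linarith; linarith]

end largebounds

section hzbounds
variable {α x : ℝ}

lemma hZero_nonneg (hα0 : 0 ≤ α) (hx : 0 < x) : 0 ≤ hZero α x :=
  mul_nonneg (Real.rpow_nonneg hx.le _) (F_nonneg _)

lemma x4_eq (x : ℝ) : x ^ (4:ℕ) = x ^ ((4:ℝ)) := by
  rw [← Real.rpow_natCast x 4]; norm_num

lemma hZero_sq_div_le_small (hα0 : 0 ≤ α) (hα1 : α < 1) (hx : 0 < x) (hx1 : x ≤ 1) :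
    hZero α x ^ 2 / x ^ 4 ≤ 1 := by
  have hxa : ∀ p : ℝ, 0 ≤ x ^ p := fun p => Real.rpow_nonneg hx.le p
  rw [div_le_one (by positivity)]
  set u := x ^ (1 + α) / (1 + α) with hu
  set X := x ^ (1 + α) with hX
  have hu0 : 0 ≤ u := u_nonneg hα0 hx
  have hu1 : u ≤ X := u_le hα0 hx
  have hB : hZero α x ≤ x ^ ((-(α / 2)) + (1 + α) + (1 + α)) := by
    rw [← rpow_sum3 hx, mul_assoc]
    unfold hZero
    apply mul_le_mul le_rfl (by nlinarith [F_le_sq hu0]) (F_nonneg _) (hxa _)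
  have h2 : hZero α x ^ 2 ≤ (x ^ ((-(α / 2)) + (1 + α) + (1 + α))) ^ 2 :=
    pow_le_pow_left₀ (hZero_nonneg hα0 hx) hB 2
  calc hZero α x ^ 2 ≤ (x ^ ((-(α / 2)) + (1 + α) + (1 + α))) ^ 2 := h2
    _ = x ^ ((-(α / 2)) + (1 + α) + (1 + α)) * x ^ ((-(α / 2)) + (1 + α) + (1 + α)) := sq _
    _ = x ^ (((-(α / 2)) + (1 + α) + (1 + α)) + ((-(α / 2)) + (1 + α) + (1 + α))) :=
        (Real.rpow_add hx _ _).symm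
    _ ≤ x ^ ((4:ℝ)) := Real.rpow_le_rpow_of_exponent_ge hx hx1 (by linarith)
    _ = x ^ (4:ℕ) := (x4_eq x).symm

lemma hZero_sq_div_le_large (hα0 : 0 ≤ α) (hα1 : α < 1) (hx1 : 1 ≤ x) :
    hZero α x ^ 2 / x ^ 4 ≤ x ^ (α - 2) := by
  have hx : 0 < x := lt_of_lt_of_le one_pos hx1
  have hxa : ∀ p : ℝ, 0 ≤ x ^ p := fun p => Real.rpow_nonneg hx.le p
  rw [div_le_iff₀ (by positivity)]
  set u := x ^ (1 + α) / (1 + α) with hu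
  set X := x ^ (1 + α) with hX
  have hu0 : 0 ≤ u := u_nonneg hα0 hx
  have hu1 : u ≤ X := u_le hα0 hx
  have hE1 : Real.exp (-u) ≤ 1 := Real.exp_le_one_iff.mpr (by linarith)
  have hB : hZero α x ≤ x ^ ((-(α / 2)) + (1 + α)) := by
    rw [Real.rpow_add hx]
    unfold hZero
    apply mul_le_mul le_rfl (by linarith) (F_nonneg _) (hxa _)
  calc hZero α x ^ 2 ≤ (x ^ ((-(α / 2)) + (1 + α))) ^ 2 :=
        pow_le_pow_left₀ (hZero_nonneg hα0 hx) hB 2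
    _ = x ^ (((-(α / 2)) + (1 + α)) + ((-(α / 2)) + (1 + α))) := by
        rw [sq, ← Real.rpow_add hx]
    _ = x ^ ((α - 2) + 4) := by ring_nf
    _ = x ^ (α - 2) * x ^ ((4:ℝ)) := Real.rpow_add hx _ _
    _ = x ^ (α - 2) * x ^ (4:ℕ) := by rw [x4_eq]

end hzbounds

section assembly
variable {α x : ℝ}

lemma continuousAt_hTwo (hx : 0 < x) : ContinuousAt (hTwo α) x := by
  have hc : ∀ p : ℝ, ContinuousAt (fun y : ℝ => y ^ p) x :=
    fun p => Real.continuousAt_rpow_const x p (Or.inl hx.ne')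
  have hU : ContinuousAt (fun y : ℝ => y ^ (1 + α) / (1 + α)) x := (hc (1 + α)).div_const _
  have hE : ContinuousAt (fun y : ℝ => Real.exp (-(y ^ (1 + α) / (1 + α)))) x :=
    Real.continuous_exp.continuousAt.comp hU.neg
  have hF : ContinuousAt
      (fun y : ℝ => Real.exp (-(y ^ (1 + α) / (1 + α))) - 1 + y ^ (1 + α) / (1 + α)) x :=
    (hE.sub continuousAt_const).add hU
  have h1E : ContinuousAt (fun y : ℝ => 1 - Real.exp (-(y ^ (1 + α) / (1 + α)))) x :=
    continuousAt_const.sub hE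
  unfold hTwo
  exact ((((continuousAt_const.mul (hc _)).mul hF).sub
      ((continuousAt_const.mul (hc _)).mul ((hc α).mul h1E))).add
      ((hc _).mul ((continuousAt_const.mul (hc _)).mul h1E))).add
      ((hc _).mul ((hc α).mul ((hc α).mul hE)))

lemma deriv_hZero_eq (hα : 0 ≤ α) (hx : 0 < x) : deriv (hZero α) x = hOne α x :=
  (hasDerivAt_hZero hα hx).deriv

lemma hasDerivAt_deriv_hZero (hα : 0 ≤ α) (hx : 0 < x) :
    HasDerivAt (deriv (hZero α)) (hTwo α x) x := by
  apply (hasDerivAt_hOne hα hx).congr_of_eventuallyEq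
  filter_upwards [Ioi_mem_nhds hx] with y hy
  exact deriv_hZero_eq hα hy

lemma deriv2_hZero_eq (hα : 0 ≤ α) (hx : 0 < x) :
    deriv (deriv (hZero α)) x = hTwo α x :=
  (hasDerivAt_deriv_hZero hα hx).deriv

end assembly

/-- For `α ∈ [0,1)`, the function `h₀` is twice continuously differentiable
on `(0,∞)` and satisfies `∫₀^∞ x⁻⁴ h₀(x)² dx < ∞` and `∫₀^∞ h₀''(x)² dx < ∞`. -/
theorem hZero_regularity_and_integrability (α : ℝ) (hα0 : 0 ≤ α) (hα1 : α < 1) :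
    (∀ x ∈ Set.Ioi (0 : ℝ), DifferentiableAt ℝ (hZero α) x) ∧
    (∀ x ∈ Set.Ioi (0 : ℝ), DifferentiableAt ℝ (deriv (hZero α)) x) ∧
    ContinuousOn (deriv (deriv (hZero α))) (Set.Ioi (0 : ℝ)) ∧
    IntegrableOn (fun x : ℝ => hZero α x ^ 2 / x ^ 4) (Set.Ioi 0) ∧
    IntegrableOn (fun x : ℝ => deriv (deriv (hZero α)) x ^ 2) (Set.Ioi 0) := by
  have hunion : Set.Ioc (0:ℝ) 1 ∪ Set.Ioi 1 = Set.Ioi 0 := Set.Ioc_union_Ioi_eq_Ioi zero_le_one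
  refine ⟨fun x hx => (hasDerivAt_hZero hα0 hx).differentiableAt,
    fun x hx => (hasDerivAt_deriv_hZero hα0 hx).differentiableAt, ?_, ?_, ?_⟩
  · exact ContinuousOn.congr (fun x hx => (continuousAt_hTwo hx).continuousWithinAt)
      (fun x hx => deriv2_hZero_eq hα0 hx)
  · -- integrability of hZero² / x⁴
    have hcont : ∀ x : ℝ, 0 < x → ContinuousAt (fun x : ℝ => hZero α x ^ 2 / x ^ 4) x := by
      intro x hx
      exact (((hasDerivAt_hZero hα0 hx).differentiableAt.continuousAt.pow 2)).div
        (continuousAt_pow x 4) (by positivity)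
    have hA : IntegrableOn (fun x : ℝ => hZero α x ^ 2 / x ^ 4) (Set.Ioc 0 1) := by
      apply Integrable.mono' (g := fun _ => (1:ℝ))
        (integrableOn_const measure_Ioc_lt_top.ne)
        (ContinuousOn.aestronglyMeasurable
          (fun x hx => (hcont x hx.1).continuousWithinAt) measurableSet_Ioc)
      rw [ae_restrict_iff' measurableSet_Ioc]
      filter_upwards with x hx
      rw [Real.norm_eq_abs, abs_of_nonneg (by positivity)]
      exact hZero_sq_div_le_small hα0 hα1 hx.1 hx.2
    have hB : IntegrableOn (fun x : ℝ => hZero α x ^ 2 / x ^ 4) (Set.Ioi 1) := by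
      apply Integrable.mono' (g := fun x : ℝ => x ^ (α - 2))
        (integrableOn_Ioi_rpow_of_lt (by linarith) one_pos)
        (ContinuousOn.aestronglyMeasurable
          (fun x hx => (hcont x (lt_trans one_pos hx)).continuousWithinAt) measurableSet_Ioi)
      rw [ae_restrict_iff' measurableSet_Ioi]
      filter_upwards with x hx
      rw [Real.norm_eq_abs, abs_of_nonneg (by positivity)]
      exact hZero_sq_div_le_large hα0 hα1 (le_of_lt hx)
    rw [← hunion]; exact hA.union hB
  · -- integrability of (h₀'')²
    have hInt : IntegrableOn (fun x : ℝ => hTwo α x ^ 2) (Set.Ioi 0) := by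
      have hcont : ∀ x : ℝ, 0 < x → ContinuousAt (fun x : ℝ => hTwo α x ^ 2) x :=
        fun x hx => (continuousAt_hTwo hx).pow 2
      have hA : IntegrableOn (fun x : ℝ => hTwo α x ^ 2) (Set.Ioc 0 1) := by
        apply Integrable.mono' (g := fun _ => (16:ℝ))
          (integrableOn_const measure_Ioc_lt_top.ne)
          (ContinuousOn.aestronglyMeasurable
            (fun x hx => (hcont x hx.1).continuousWithinAt) measurableSet_Ioc)
        rw [ae_restrict_iff' measurableSet_Ioc]
        filter_upwards with x hx
        rw [Real.norm_eq_abs, abs_of_nonneg (by positivity), ← sq_abs]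
        calc |hTwo α x| ^ 2 ≤ 4 ^ 2 :=
            pow_le_pow_left₀ (abs_nonneg _) (hTwo_abs_le_small hα0 hα1 hx.1 hx.2) 2
          _ = 16 := by norm_num
      have hB : IntegrableOn (fun x : ℝ => hTwo α x ^ 2) (Set.Ioi 1) := by
        apply Integrable.mono' (g := fun x : ℝ => 90000 * x ^ (α - 2))
          ((integrableOn_Ioi_rpow_of_lt (by linarith) one_pos).const_mul 90000)
          (ContinuousOn.aestronglyMeasurable
            (fun x hx => (hcont x (lt_trans one_pos hx)).continuousWithinAt) measurableSet_Ioi)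
        rw [ae_restrict_iff' measurableSet_Ioi]
        filter_upwards with x hx
        have hx0 : (0:ℝ) < x := lt_trans one_pos hx
        rw [Real.norm_eq_abs, abs_of_nonneg (by positivity), ← sq_abs]
        calc |hTwo α x| ^ 2 ≤ (300 * x ^ (α / 2 - 1)) ^ 2 :=
            pow_le_pow_left₀ (abs_nonneg _) (hTwo_abs_le_large hα0 hα1 (le_of_lt hx)) 2
          _ = 90000 * (x ^ (α / 2 - 1) * x ^ (α / 2 - 1)) := by ring
          _ = 90000 * x ^ (α - 2) := by
              rw [← Real.rpow_add hx0]; ring_nf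
      rw [← hunion]; exact hA.union hB
    apply IntegrableOn.congr_fun hInt (fun x hx => by rw [deriv2_hZero_eq hα0 hx]) measurableSet_Ioi
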